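/- Let r₁, r₂ > 0 and let θ = (θ₁,θ₂), θ' = (θ₁',θ₂') ∈ [−r₁,r₁] × [−1/2 + 1/r₂, ∞). Define f_θ(t) = θ₁ t^{θ₂} on (0,1]. Then the L²((0,1])-distance between f_θ and f_{θ'} satisfies ‖f_θ − f_{θ'}‖₂ ≤ r₂^{1/2}|θ₁ − θ₁'| + √2·r₁·r₂^{3/2}|θ₂ − θ₂'|. -/

import Mathlib

open MeasureTheory Real

private lemma aux_exp_diff (x y : ℝ) (h : y ≤ x) :
    Real.exp x - Real.exp y ≤ (x - y) * Real.exp x := by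
  have h1 := Real.add_one_le_exp (y - x)
  have h2 : Real.exp y = Real.exp x * Real.exp (y - x) := by
    rw [← Real.exp_add]; ring_nf
  nlinarith [Real.exp_pos x, Real.exp_pos (y - x)]

private lemma aux_rpow_diff (t a b : ℝ) (ht : 0 < t) (ht1 : t ≤ 1) (hab : b ≤ a) :
    |t ^ a - t ^ b| ≤ |a - b| * (-Real.log t) * t ^ b := by
  have hL : Real.log t ≤ 0 := Real.log_nonpos ht.le ht1
  rw [Real.rpow_def_of_pos ht a, Real.rpow_def_of_pos ht b]
  have h1 : Real.log t * a ≤ Real.log t * b := mul_le_mul_of_nonpos_left hab hL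
  have h2 : Real.exp (Real.log t * a) ≤ Real.exp (Real.log t * b) := Real.exp_le_exp.mpr h1
  rw [abs_of_nonpos (by linarith), abs_of_nonneg (by linarith : (0:ℝ) ≤ a - b)]
  have h3 := aux_exp_diff (Real.log t * b) (Real.log t * a) h1
  have h4 : (Real.log t * b - Real.log t * a) * Real.exp (Real.log t * b)
      = (a - b) * (-Real.log t) * Real.exp (Real.log t * b) := by ring
  linarith

private lemma aux_mul_exp_neg (x : ℝ) : x * Real.exp (-x) ≤ Real.exp (-1) := by
  have h1 := Real.add_one_le_exp (x - 1)
  have h2 : Real.exp (x - 1) = Real.exp x * Real.exp (-1) := by rw [← Real.exp_add]; ring_nf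
  have hx : x ≤ Real.exp x * Real.exp (-1) := by linarith
  have h3 : Real.exp x * Real.exp (-x) = 1 := by rw [← Real.exp_add]; simp
  calc x * Real.exp (-x) ≤ (Real.exp x * Real.exp (-1)) * Real.exp (-x) :=
        mul_le_mul_of_nonneg_right hx (Real.exp_pos _).le
    _ = (Real.exp x * Real.exp (-x)) * Real.exp (-1) := by ring
    _ = Real.exp (-1) := by rw [h3, one_mul]

private lemma aux_neg_log_rpow (t p : ℝ) (ht : 0 < t) (ht1 : t ≤ 1) (hp : 0 < p) :
    (-Real.log t) * t ^ p ≤ Real.exp (-1) / p := by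
  have h := aux_mul_exp_neg (-(p * Real.log t))
  rw [neg_neg] at h
  rw [Real.rpow_def_of_pos ht, le_div_iff₀ hp]
  have heq : (-Real.log t) * Real.exp (Real.log t * p) * p
      = -(p * Real.log t) * Real.exp (p * Real.log t) := by rw [mul_comm (Real.log t) p]; ring
  linarith [heq ▸ h, heq]

private lemma aux_logsq_rpow (t c ε : ℝ) (ht : 0 < t) (ht1 : t ≤ 1) (hε : 0 < ε) :
    (Real.log t) ^ 2 * t ^ (2 * c) ≤ (2 / ε * Real.exp (-1)) ^ 2 * t ^ (2 * c - ε) := by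
  have h1 := aux_neg_log_rpow t (ε / 2) ht ht1 (by linarith)
  have hnn1 : 0 ≤ (-Real.log t) * t ^ (ε / 2) :=
    mul_nonneg (neg_nonneg.mpr (Real.log_nonpos ht.le ht1)) (Real.rpow_nonneg ht.le _)
  have h2 : ((-Real.log t) * t ^ (ε / 2)) ^ 2 ≤ (Real.exp (-1) / (ε / 2)) ^ 2 :=
    pow_le_pow_left₀ hnn1 h1 2
  have e1 : (t ^ (ε / 2)) ^ (2 : ℕ) = t ^ ε := by
    rw [← Real.rpow_natCast (t ^ (ε / 2)) 2, ← Real.rpow_mul ht.le]; norm_num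
  have e2 : t ^ ε * t ^ (2 * c - ε) = t ^ (2 * c) := by
    rw [← Real.rpow_add ht]; ring_nf
  have key : (Real.log t) ^ 2 * t ^ (2 * c)
      = ((-Real.log t) * t ^ (ε / 2)) ^ 2 * t ^ (2 * c - ε) := by
    rw [mul_pow, neg_sq, e1, mul_assoc, e2]
  rw [key]
  have e3 : Real.exp (-1) / (ε / 2) = 2 / ε * Real.exp (-1) := by
    field_simp
  rw [← e3]
  exact mul_le_mul_of_nonneg_right h2 (Real.rpow_nonneg ht.le _)

private lemma aux_integrableOn_rpow (s : ℝ) (hs : -1 < s) :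
    MeasureTheory.IntegrableOn (fun t : ℝ => t ^ s) (Set.Ioc 0 1) :=
  (intervalIntegral.intervalIntegrable_rpow' hs (a := 0) (b := 1)).1

private lemma aux_integral_rpow (s : ℝ) (hs : -1 < s) :
    ∫ t in Set.Ioc (0:ℝ) 1, t ^ s = 1 / (s + 1) := by
  rw [← intervalIntegral.integral_of_le (zero_le_one), integral_rpow (Or.inl hs),
    Real.one_rpow, Real.zero_rpow (by linarith)]
  ring

set_option maxHeartbeats 1000000 in
theorem stmt_6 (r₁ r₂ θ₁ θ₂ θ₁' θ₂' : ℝ) (hr₁ : 0 < r₁) (hr₂ : 0 < r₂)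
    (h₁ : θ₁ ∈ Set.Icc (-r₁) r₁) (h₁' : θ₁' ∈ Set.Icc (-r₁) r₁)
    (h₂ : -1/2 + 1/r₂ ≤ θ₂) (h₂' : -1/2 + 1/r₂ ≤ θ₂') :
    Real.sqrt (∫ t in Set.Ioc (0:ℝ) 1, (θ₁ * t ^ θ₂ - θ₁' * t ^ θ₂') ^ 2)
      ≤ r₂ ^ ((1:ℝ)/2) * |θ₁ - θ₁'| + Real.sqrt 2 * r₁ * r₂ ^ ((3:ℝ)/2) * |θ₂ - θ₂'| := by
  have hrinv : 0 < 1 / r₂ := by positivity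
  have hcge : -1/2 + 1/r₂ ≤ min θ₂ θ₂' := le_min h₂ h₂'
  have hmin : min θ₂ θ₂' ≤ θ₂ := min_le_left _ _
  have hs₁ : (-1 : ℝ) < 2 * θ₂ := by linarith
  have hs₂ : (-1 : ℝ) < 2 * min θ₂ θ₂' - 1 / r₂ := by linarith
  have hKnn : (0:ℝ) ≤ (2 / (1 / r₂) * Real.exp (-1)) ^ 2 := sq_nonneg _
  have hint1 := aux_integrableOn_rpow (2 * θ₂) hs₁
  have hint2 := aux_integrableOn_rpow (2 * min θ₂ θ₂' - 1 / r₂) hs₂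
  have hGint : MeasureTheory.IntegrableOn
      (fun t : ℝ => 2 * (θ₁ - θ₁') ^ 2 * t ^ (2 * θ₂)
        + 2 * r₁ ^ 2 * (θ₂ - θ₂') ^ 2 * (2 / (1 / r₂) * Real.exp (-1)) ^ 2
          * t ^ (2 * min θ₂ θ₂' - 1 / r₂)) (Set.Ioc 0 1) :=
    (hint1.const_mul _).add (hint2.const_mul _)
  have hpt : ∀ t ∈ Set.Ioc (0:ℝ) 1, (θ₁ * t ^ θ₂ - θ₁' * t ^ θ₂') ^ 2
      ≤ 2 * (θ₁ - θ₁') ^ 2 * t ^ (2 * θ₂)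
        + 2 * r₁ ^ 2 * (θ₂ - θ₂') ^ 2 * (2 / (1 / r₂) * Real.exp (-1)) ^ 2
          * t ^ (2 * min θ₂ θ₂' - 1 / r₂) := by
    intro t htm
    obtain ⟨ht, ht1⟩ := htm
    have hsq1 : t ^ (2 * θ₂) = (t ^ θ₂) ^ 2 := by
      rw [two_mul, Real.rpow_add ht]; ring
    have hdiff : |t ^ θ₂ - t ^ θ₂'| ≤ |θ₂ - θ₂'| * (-Real.log t) * t ^ min θ₂ θ₂' := by
      rcases le_total θ₂' θ₂ with hle | hle
      · rw [min_eq_right hle]; exact aux_rpow_diff t θ₂ θ₂' ht ht1 hle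
      · rw [min_eq_left hle, abs_sub_comm (t ^ θ₂), abs_sub_comm θ₂]
        exact aux_rpow_diff t θ₂' θ₂ ht ht1 hle
    have hB2 : (t ^ θ₂ - t ^ θ₂') ^ 2
        ≤ (θ₂ - θ₂') ^ 2 * ((Real.log t) ^ 2 * t ^ (2 * min θ₂ θ₂')) := by
      have habs := pow_le_pow_left₀ (abs_nonneg _) hdiff 2
      have hsqc : t ^ (2 * min θ₂ θ₂') = (t ^ min θ₂ θ₂') ^ 2 := by
        rw [two_mul, Real.rpow_add ht]; ring
      rw [sq_abs] at habs
      calc (t ^ θ₂ - t ^ θ₂') ^ 2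
          ≤ (|θ₂ - θ₂'| * (-Real.log t) * t ^ min θ₂ θ₂') ^ 2 := habs
        _ = (θ₂ - θ₂') ^ 2 * ((Real.log t) ^ 2 * t ^ (2 * min θ₂ θ₂')) := by
            rw [hsqc, mul_pow, mul_pow, sq_abs, neg_sq]; ring
    have hlog := aux_logsq_rpow t (min θ₂ θ₂') (1 / r₂) ht ht1 hrinv
    have hθ₁' : θ₁' ^ 2 ≤ r₁ ^ 2 := by nlinarith [h₁'.1, h₁'.2]
    have hexpand : θ₁ * t ^ θ₂ - θ₁' * t ^ θ₂'
        = (θ₁ - θ₁') * t ^ θ₂ + θ₁' * (t ^ θ₂ - t ^ θ₂') := by ring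
    have hrp1 : (0:ℝ) ≤ t ^ (2 * min θ₂ θ₂') := Real.rpow_nonneg ht.le _
    have hrp2 : (0:ℝ) ≤ t ^ (2 * min θ₂ θ₂' - 1 / r₂) := Real.rpow_nonneg ht.le _
    have hB3 : (θ₁' * (t ^ θ₂ - t ^ θ₂')) ^ 2
        ≤ r₁ ^ 2 * ((θ₂ - θ₂') ^ 2
            * ((2 / (1 / r₂) * Real.exp (-1)) ^ 2 * t ^ (2 * min θ₂ θ₂' - 1 / r₂))) := by
      have s1 : θ₁' ^ 2 * (t ^ θ₂ - t ^ θ₂') ^ 2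
          ≤ r₁ ^ 2 * ((θ₂ - θ₂') ^ 2 * ((Real.log t) ^ 2 * t ^ (2 * min θ₂ θ₂'))) :=
        mul_le_mul hθ₁' hB2 (sq_nonneg _) (sq_nonneg _)
      have s2 : r₁ ^ 2 * ((θ₂ - θ₂') ^ 2 * ((Real.log t) ^ 2 * t ^ (2 * min θ₂ θ₂')))
          ≤ r₁ ^ 2 * ((θ₂ - θ₂') ^ 2
            * ((2 / (1 / r₂) * Real.exp (-1)) ^ 2 * t ^ (2 * min θ₂ θ₂' - 1 / r₂))) := by
        apply mul_le_mul_of_nonneg_left _ (sq_nonneg _)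
        exact mul_le_mul_of_nonneg_left hlog (sq_nonneg _)
      calc (θ₁' * (t ^ θ₂ - t ^ θ₂')) ^ 2 = θ₁' ^ 2 * (t ^ θ₂ - t ^ θ₂') ^ 2 := by ring
        _ ≤ _ := le_trans s1 s2
    rw [hexpand, hsq1]
    nlinarith [hB3, sq_nonneg ((θ₁ - θ₁') * t ^ θ₂ - θ₁' * (t ^ θ₂ - t ^ θ₂'))]
  have hmono : (∫ t in Set.Ioc (0:ℝ) 1, (θ₁ * t ^ θ₂ - θ₁' * t ^ θ₂') ^ 2)
      ≤ ∫ t in Set.Ioc (0:ℝ) 1,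
          (2 * (θ₁ - θ₁') ^ 2 * t ^ (2 * θ₂)
            + 2 * r₁ ^ 2 * (θ₂ - θ₂') ^ 2 * (2 / (1 / r₂) * Real.exp (-1)) ^ 2
              * t ^ (2 * min θ₂ θ₂' - 1 / r₂)) := by
    apply integral_mono_of_nonneg
    · exact Filter.Eventually.of_forall fun t => sq_nonneg _
    · exact hGint
    · filter_upwards [ae_restrict_mem measurableSet_Ioc] with t htm using hpt t htm
  have hGval : (∫ t in Set.Ioc (0:ℝ) 1,
          (2 * (θ₁ - θ₁') ^ 2 * t ^ (2 * θ₂)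
            + 2 * r₁ ^ 2 * (θ₂ - θ₂') ^ 2 * (2 / (1 / r₂) * Real.exp (-1)) ^ 2
              * t ^ (2 * min θ₂ θ₂' - 1 / r₂)))
      = 2 * (θ₁ - θ₁') ^ 2 * (1 / (2 * θ₂ + 1))
        + 2 * r₁ ^ 2 * (θ₂ - θ₂') ^ 2 * (2 / (1 / r₂) * Real.exp (-1)) ^ 2
          * (1 / (2 * min θ₂ θ₂' - 1 / r₂ + 1)) := by
    rw [integral_add (hint1.const_mul _) (hint2.const_mul _),
      integral_const_mul, integral_const_mul, aux_integral_rpow _ hs₁, aux_integral_rpow _ hs₂]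
  have hb1 : 1 / (2 * θ₂ + 1) ≤ r₂ / 2 := by
    have h2r : 2 / r₂ ≤ 2 * θ₂ + 1 := by
      have he : (2:ℝ) / r₂ = 2 * (1 / r₂) := by ring
      rw [he]; linarith
    have := one_div_le_one_div_of_le (by positivity : (0:ℝ) < 2 / r₂) h2r
    rwa [one_div_div] at this
  have hb2 : 1 / (2 * min θ₂ θ₂' - 1 / r₂ + 1) ≤ r₂ := by
    rw [div_le_iff₀ (by linarith)]
    have h1r : 1 / r₂ * r₂ = 1 := by field_simp
    nlinarith
  have hexp : Real.exp (-1) ≤ 1 / 2 := by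
    have h2e : (2:ℝ) ≤ Real.exp 1 := by
      have := Real.add_one_le_exp (1:ℝ); linarith
    rw [Real.exp_neg, inv_le_comm₀ (by positivity) (by norm_num)]
    simpa using h2e
  have hKb : (2 / (1 / r₂) * Real.exp (-1)) ^ 2 * r₂ ≤ r₂ ^ 3 := by
    have h2r : 2 / (1 / r₂) = 2 * r₂ := by field_simp
    rw [h2r]
    have h1 : 2 * r₂ * Real.exp (-1) ≤ r₂ := by nlinarith [Real.exp_pos (-1)]
    have h0 : (0:ℝ) ≤ 2 * r₂ * Real.exp (-1) := by positivity
    nlinarith [mul_le_mul h1 h1 h0 hr₂.le, hr₂]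
  have hAnn : (0:ℝ) ≤ r₂ ^ ((1:ℝ)/2) * |θ₁ - θ₁'| := by positivity
  have hBnn : (0:ℝ) ≤ Real.sqrt 2 * r₁ * r₂ ^ ((3:ℝ)/2) * |θ₂ - θ₂'| := by positivity
  have hAsq : (r₂ ^ ((1:ℝ)/2) * |θ₁ - θ₁'|) ^ 2 = r₂ * (θ₁ - θ₁') ^ 2 := by
    rw [mul_pow, sq_abs, ← Real.rpow_natCast (r₂ ^ ((1:ℝ)/2)) 2, ← Real.rpow_mul hr₂.le]
    norm_num
  have hBsq : (Real.sqrt 2 * r₁ * r₂ ^ ((3:ℝ)/2) * |θ₂ - θ₂'|) ^ 2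
      = 2 * r₁ ^ 2 * r₂ ^ 3 * (θ₂ - θ₂') ^ 2 := by
    have h32 : (r₂ ^ ((3:ℝ)/2)) ^ (2:ℕ) = r₂ ^ (3:ℕ) := by
      rw [← Real.rpow_natCast (r₂ ^ ((3:ℝ)/2)) 2, ← Real.rpow_mul hr₂.le,
        ← Real.rpow_natCast r₂ 3]
      norm_num
    have hs2' : Real.sqrt 2 ^ (2:ℕ) = 2 := Real.sq_sqrt (by norm_num)
    rw [mul_pow, mul_pow, mul_pow, sq_abs, hs2', h32]
  have hItot : (∫ t in Set.Ioc (0:ℝ) 1, (θ₁ * t ^ θ₂ - θ₁' * t ^ θ₂') ^ 2)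
      ≤ (r₂ ^ ((1:ℝ)/2) * |θ₁ - θ₁'| + Real.sqrt 2 * r₁ * r₂ ^ ((3:ℝ)/2) * |θ₂ - θ₂'|) ^ 2 := by
    have step1 : 2 * (θ₁ - θ₁') ^ 2 * (1 / (2 * θ₂ + 1))
        + 2 * r₁ ^ 2 * (θ₂ - θ₂') ^ 2 * (2 / (1 / r₂) * Real.exp (-1)) ^ 2
          * (1 / (2 * min θ₂ θ₂' - 1 / r₂ + 1))
        ≤ r₂ * (θ₁ - θ₁') ^ 2 + 2 * r₁ ^ 2 * r₂ ^ 3 * (θ₂ - θ₂') ^ 2 := by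
      have t1 : 2 * (θ₁ - θ₁') ^ 2 * (1 / (2 * θ₂ + 1)) ≤ 2 * (θ₁ - θ₁') ^ 2 * (r₂ / 2) :=
        mul_le_mul_of_nonneg_left hb1 (by positivity)
      have t2 : 2 * r₁ ^ 2 * (θ₂ - θ₂') ^ 2 * (2 / (1 / r₂) * Real.exp (-1)) ^ 2
            * (1 / (2 * min θ₂ θ₂' - 1 / r₂ + 1))
          ≤ 2 * r₁ ^ 2 * (θ₂ - θ₂') ^ 2 * ((2 / (1 / r₂) * Real.exp (-1)) ^ 2 * r₂) := by
        rw [mul_assoc]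
        exact mul_le_mul_of_nonneg_left
          (mul_le_mul_of_nonneg_left hb2 hKnn) (by positivity)
      have t3 : 2 * r₁ ^ 2 * (θ₂ - θ₂') ^ 2 * ((2 / (1 / r₂) * Real.exp (-1)) ^ 2 * r₂)
          ≤ 2 * r₁ ^ 2 * (θ₂ - θ₂') ^ 2 * r₂ ^ 3 :=
        mul_le_mul_of_nonneg_left hKb (by positivity)
      nlinarith [t1, t2, t3]
    have step2 : r₂ * (θ₁ - θ₁') ^ 2 + 2 * r₁ ^ 2 * r₂ ^ 3 * (θ₂ - θ₂') ^ 2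
        ≤ (r₂ ^ ((1:ℝ)/2) * |θ₁ - θ₁'| + Real.sqrt 2 * r₁ * r₂ ^ ((3:ℝ)/2) * |θ₂ - θ₂'|) ^ 2 := by
      nlinarith [mul_nonneg hAnn hBnn, hAsq, hBsq]
    linarith [hmono, hGval ▸ hmono, le_trans (hGval ▸ hmono) (le_trans step1 step2)]
  calc Real.sqrt (∫ t in Set.Ioc (0:ℝ) 1, (θ₁ * t ^ θ₂ - θ₁' * t ^ θ₂') ^ 2)
      ≤ Real.sqrt ((r₂ ^ ((1:ℝ)/2) * |θ₁ - θ₁'|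
          + Real.sqrt 2 * r₁ * r₂ ^ ((3:ℝ)/2) * |θ₂ - θ₂'|) ^ 2) := Real.sqrt_le_sqrt hItot
    _ = _ := Real.sqrt_sq (by linarith)
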